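/- Let E be a finite-dimensional real inner product space, let 0 < μ ≤ L, γ > 0, n ≥ 1 and s ∈ {1,…,n}. For each i ∈ {1,…,n}, let f_i : E → ℝ be differentiable, μ-strongly convex (f_i − (μ/2)‖·‖² is convex) and L-smooth (∇f_i is L-Lipschitz). Let x^⋆ ∈ E, let Ω ⊆ {1,…,n} with |Ω| = s, and for each i ∈ Ω let z_i ∈ E and x_i ∈ E satisfy x_i + γ·∇f_i(x_i) = z_i. Set z_i^⋆ := x^⋆ + γ·∇f_i(x^⋆) and x' := (1/s)·∑_{i∈Ω} x_i. Then (1 + 2γμL/(L+μ))·s·‖x' − x^⋆‖² + (1 + 2/(γ(L+μ)))·γ²·∑_{i∈Ω} ‖∇f_i(x_i) − ∇f_i(x^⋆)‖² ≤ ∑_{i∈Ω} ‖z_i − z_i^⋆‖². -/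

import Mathlib

open Finset InnerProductSpace

section Aux
variable {E : Type*} [NormedAddCommGroup E] [InnerProductSpace ℝ E] [CompleteSpace E]

local notation "⟪" x ", " y "⟫" => @inner ℝ _ _ x y

lemma line_hasDerivAt {h : E → ℝ} {G : E → E} (hG : ∀ p, HasGradientAt h (G p) p)
    (c d : E) (t : ℝ) :
    HasDerivAt (fun t : ℝ => h (c + t • d)) ⟪G (c + t • d), d⟫ t := by
  have hline : HasDerivAt (fun t : ℝ => c + t • d) d t := by
    simpa using ((hasDerivAt_id t).smul_const d).const_add c
  have := (hG (c + t • d)).hasFDerivAt.comp_hasDerivAt t hline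
  simpa [toDual_apply_apply, Function.comp_def] using this

lemma convex_first_order {h : E → ℝ} {G : E → E} (hG : ∀ p, HasGradientAt h (G p) p)
    (hconv : ConvexOn ℝ Set.univ h) (x y : E) :
    h x + ⟪G x, y - x⟫ ≤ h y := by
  have hφc : ConvexOn ℝ Set.univ (fun t : ℝ => h (x + t • (y - x))) := by
    have h2 := hconv.comp_affineMap (AffineMap.lineMap x y : ℝ →ᵃ[ℝ] E)
    have : (fun t : ℝ => h (x + t • (y - x))) = h ∘ (AffineMap.lineMap x y : ℝ →ᵃ[ℝ] E) := by
      funext t; simp [AffineMap.lineMap_apply, add_comm]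
    rw [this]
    simpa using h2
  have hd := line_hasDerivAt hG x (y - x) 0
  have hslope := hφc.le_slope_of_hasDerivAt (Set.mem_univ 0) (Set.mem_univ 1)
    zero_lt_one hd
  simp only [slope_def_field, zero_smul, add_zero, one_smul, add_sub_cancel] at hslope
  norm_num at hslope
  linarith

lemma descent_lemma {h : E → ℝ} {G : E → E} (hG : ∀ p, HasGradientAt h (G p) p)
    {K : ℝ}
    (hK : ∀ u v : E, ⟪G u - G v, u - v⟫ ≤ K * ‖u - v‖ ^ 2) (x y : E) :
    h y ≤ h x + ⟪G x, y - x⟫ + K / 2 * ‖y - x‖ ^ 2 := by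
  set d := y - x with hd
  set ψ : ℝ → ℝ := fun t => h (x + t • d) - t * ⟪G x, d⟫ - K / 2 * ‖d‖ ^ 2 * t ^ 2 with hψ
  have hψd : ∀ t : ℝ, HasDerivAt ψ (⟪G (x + t • d) - G x, d⟫ - K * ‖d‖ ^ 2 * t) t := by
    intro t
    have h1 := line_hasDerivAt hG x d t
    have h2 : HasDerivAt (fun t : ℝ => t * ⟪G x, d⟫) ⟪G x, d⟫ t := by
      simpa using (hasDerivAt_id t).mul_const ⟪G x, d⟫
    have h3 : HasDerivAt (fun t : ℝ => K / 2 * ‖d‖ ^ 2 * t ^ 2)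
        (K / 2 * ‖d‖ ^ 2 * (2 * t)) t := by
      simpa using (hasDerivAt_pow 2 t).const_mul (K / 2 * ‖d‖ ^ 2)
    have := (h1.sub h2).sub h3
    refine this.congr_deriv ?_
    rw [inner_sub_left]; ring
  have hanti : AntitoneOn ψ (Set.Icc (0:ℝ) 1) := by
    apply antitoneOn_of_deriv_nonpos (convex_Icc 0 1)
    · exact fun t _ => ((hψd t).continuousAt).continuousWithinAt
    · intro t _
      exact ((hψd t).differentiableAt).differentiableWithinAt
    · intro t ht
      rw [interior_Icc] at ht
      rw [(hψd t).deriv]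
      have hKt := hK (x + t • d) x
      have h4 : (x + t • d) - x = t • d := by abel
      rw [h4, real_inner_smul_right, norm_smul] at hKt
      have h5 : ⟪G (x + t • d) - G x, d⟫ ≤ K * ‖d‖ ^ 2 * t := by
        have ht0 : 0 < t := ht.1
        rw [mul_pow, Real.norm_eq_abs, sq_abs] at hKt
        nlinarith [hKt]
      linarith
  have h01 := hanti (Set.mem_Icc.2 ⟨le_refl 0, zero_le_one⟩)
    (Set.mem_Icc.2 ⟨zero_le_one, le_refl 1⟩) zero_le_one
  have hψ0 : ψ 0 = h x := by simp [hψ]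
  have hψ1 : ψ 1 = h y - ⟪G x, d⟫ - K / 2 * ‖d‖ ^ 2 := by
    simp [hψ, hd]
  rw [hψ0, hψ1] at h01
  linarith

lemma cocoercive_aux {h : E → ℝ} {G : E → E} (hG : ∀ p, HasGradientAt h (G p) p)
    (hconv : ConvexOn ℝ Set.univ h) {K : ℝ} (hKpos : 0 < K)
    (hK : ∀ u v : E, ⟪G u - G v, u - v⟫ ≤ K * ‖u - v‖ ^ 2) (a b : E) :
    h b - ⟪G b, b⟫ ≤ h a - ⟪G b, a⟫ - ‖G a - G b‖ ^ 2 / (2 * K) := by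
  set hb : E → ℝ := fun y => h y - ⟪G b, y⟫ with hhb
  set Gb : E → E := fun p => G p - G b with hGb
  have hGgrad : ∀ p, HasGradientAt hb (Gb p) p := by
    intro p
    have h1 := (hG p).hasFDerivAt
    have h2 : HasFDerivAt (fun y => ⟪G b, y⟫) (innerSL ℝ (G b)) p :=
      (innerSL ℝ (G b)).hasFDerivAt
    have heq : (toDual ℝ E) (Gb p) = (toDual ℝ E) (G p) - innerSL ℝ (G b) := by
      ext y; simp [hGb, toDual_apply_apply, inner_sub_left]
    rw [hasGradientAt_iff_hasFDerivAt, heq]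
    exact h1.sub h2
  have hbconv : ConvexOn ℝ Set.univ hb := by
    have := hconv.sub ((innerSL ℝ (G b)).toLinearMap.concaveOn convex_univ)
    exact this
  have hKb : ∀ u v : E, ⟪Gb u - Gb v, u - v⟫ ≤ K * ‖u - v‖ ^ 2 := by
    intro u v
    have : Gb u - Gb v = G u - G v := by simp [hGb]
    rw [this]; exact hK u v
  set y : E := a - K⁻¹ • (G a - G b) with hy
  have h1 : hb b ≤ hb y := by
    have := convex_first_order hGgrad hbconv b y
    have hz : Gb b = 0 := by simp [hGb]
    rw [hz] at this
    simpa using this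
  have h2 : hb y ≤ hb a - ‖G a - G b‖ ^ 2 / (2 * K) := by
    have := descent_lemma hGgrad hKb a y
    have hya : y - a = -(K⁻¹ • (G a - G b)) := by rw [hy]; abel
    rw [hya] at this
    have e1 : ⟪Gb a, -(K⁻¹ • (G a - G b))⟫ = -(K⁻¹ * ‖G a - G b‖ ^ 2) := by
      rw [inner_neg_right, real_inner_smul_right]
      simp [hGb, real_inner_self_eq_norm_sq]
    have e2 : ‖-(K⁻¹ • (G a - G b))‖ ^ 2 = K⁻¹ ^ 2 * ‖G a - G b‖ ^ 2 := by
      rw [norm_neg, norm_smul, mul_pow, Real.norm_eq_abs, sq_abs]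
    rw [e1, e2] at this
    have hKne : K ≠ 0 := ne_of_gt hKpos
    calc hb y ≤ hb a + -(K⁻¹ * ‖G a - G b‖ ^ 2) + K / 2 * (K⁻¹ ^ 2 * ‖G a - G b‖ ^ 2) := this
      _ = hb a - ‖G a - G b‖ ^ 2 / (2 * K) := by field_simp; ring
  have := h1.trans h2
  simpa [hhb] using this

lemma cocoercive {h : E → ℝ} {G : E → E} (hG : ∀ p, HasGradientAt h (G p) p)
    (hconv : ConvexOn ℝ Set.univ h) {K : ℝ} (hKpos : 0 < K)
    (hK : ∀ u v : E, ⟪G u - G v, u - v⟫ ≤ K * ‖u - v‖ ^ 2) (a b : E) :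
    ‖G a - G b‖ ^ 2 / K ≤ ⟪G a - G b, a - b⟫ := by
  have h1 := cocoercive_aux hG hconv hKpos hK a b
  have h2 := cocoercive_aux hG hconv hKpos hK b a
  rw [norm_sub_rev] at h2
  have e : ⟪G a - G b, a - b⟫ = ⟪G a, a⟫ - ⟪G a, b⟫ - ⟪G b, a⟫ + ⟪G b, b⟫ := by
    simp [inner_sub_left, inner_sub_right]; ring
  rw [e]
  have hKne : K ≠ 0 := ne_of_gt hKpos
  have : ‖G a - G b‖ ^ 2 / K = ‖G a - G b‖ ^ 2 / (2 * K) + ‖G a - G b‖ ^ 2 / (2 * K) := by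
    field_simp; ring
  rw [this]
  linarith

lemma phi_hasGradient {f : E → ℝ} (hdiff : Differentiable ℝ f) (μ : ℝ) (p : E) :
    HasGradientAt (fun x => f x - μ / 2 * ‖x‖ ^ 2) (gradient f p - μ • p) p := by
  have h1 : HasFDerivAt f ((toDual ℝ E) (gradient f p)) p := by
    have := (hdiff p).hasFDerivAt
    rwa [show (toDual ℝ E) (gradient f p) = fderiv ℝ f p from
      (toDual ℝ E).apply_symm_apply _]
  have h2 : HasFDerivAt (fun x : E => μ / 2 * ‖x‖ ^ 2)
      ((μ / 2) • (2 • (innerSL ℝ p))) p :=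
    (hasStrictFDerivAt_norm_sq p).hasFDerivAt.const_mul (μ / 2)
  have heq : (toDual ℝ E) (gradient f p - μ • p) =
      (toDual ℝ E) (gradient f p) - (μ / 2) • (2 • (innerSL ℝ p)) := by
    ext y
    simp [toDual_apply_apply, inner_sub_left, real_inner_smul_left]
    ring
  rw [hasGradientAt_iff_hasFDerivAt, heq]
  exact h1.sub h2

lemma interpolation {f : E → ℝ} (hdiff : Differentiable ℝ f)
    {μ L : ℝ} (hμ : 0 < μ) (hμL : μ ≤ L)
    (hsc : ConvexOn ℝ Set.univ (fun x => f x - μ / 2 * ‖x‖ ^ 2))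
    (hsmooth : ∀ a b : E, ‖gradient f a - gradient f b‖ ≤ L * ‖a - b‖)
    (a b : E) :
    ‖gradient f a - gradient f b‖ ^ 2 + μ * L * ‖a - b‖ ^ 2
      ≤ (L + μ) * ⟪gradient f a - gradient f b, a - b⟫ := by
  set g := gradient f a - gradient f b with hg
  set d := a - b with hd
  set Gφ : E → E := fun p => gradient f p - μ • p with hGφ
  have hGgrad : ∀ p, HasGradientAt (fun x => f x - μ / 2 * ‖x‖ ^ 2) (Gφ p) p :=
    fun p => phi_hasGradient hdiff μ p
  have hGdiff : ∀ u v : E, Gφ u - Gφ v = (gradient f u - gradient f v) - μ • (u - v) := by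
    intro u v; simp [hGφ, smul_sub]; abel
  have hGinner : ∀ u v : E, ⟪Gφ u - Gφ v, u - v⟫
      = ⟪gradient f u - gradient f v, u - v⟫ - μ * ‖u - v‖ ^ 2 := by
    intro u v
    rw [hGdiff u v, inner_sub_left, real_inner_smul_left, real_inner_self_eq_norm_sq]
  rcases eq_or_lt_of_le hμL with hEq | hLt
  · -- L = μ
    subst hEq
    have hmono : 0 ≤ ⟪Gφ a - Gφ b, a - b⟫ := by
      have h1 := convex_first_order hGgrad hsc a b
      have h2 := convex_first_order hGgrad hsc b a
      have e1 : ⟪Gφ a, b - a⟫ = -⟪Gφ a, a - b⟫ := by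
        rw [← inner_neg_right]; congr 1; abel
      rw [e1] at h1
      rw [inner_sub_left]
      linarith [h2, h1]
    rw [hGinner a b] at hmono
    have hsm := hsmooth a b
    have hsm2 : ‖g‖ ^ 2 ≤ μ ^ 2 * ‖d‖ ^ 2 := by
      nlinarith [norm_nonneg g, norm_nonneg d]
    nlinarith [hmono]
  · -- μ < L
    have hKpos : 0 < L - μ := sub_pos.2 hLt
    have hK : ∀ u v : E, ⟪Gφ u - Gφ v, u - v⟫ ≤ (L - μ) * ‖u - v‖ ^ 2 := by
      intro u v
      rw [hGinner u v]
      have h1 := real_inner_le_norm (gradient f u - gradient f v) (u - v)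
      have h2 := hsmooth u v
      nlinarith [norm_nonneg (u - v)]
    have hco := cocoercive hGgrad hsc hKpos hK a b
    rw [hGinner a b] at hco
    have hnorm : ‖Gφ a - Gφ b‖ ^ 2 = ‖g‖ ^ 2 - 2 * μ * ⟪g, d⟫ + μ ^ 2 * ‖d‖ ^ 2 := by
      rw [hGdiff a b, ← hg, ← hd, norm_sub_sq_real, real_inner_smul_right, norm_smul,
        mul_pow, Real.norm_eq_abs, sq_abs]
      ring
    rw [div_le_iff₀ hKpos] at hco
    rw [hnorm] at hco
    nlinarith [hco]

end Aux
local notation "⟪" x ", " y "⟫" => @inner ℝ _ _ x y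

/-- Inequalities (eq41)+(eqa21) of the paper: the per-iteration deterministic
estimate for one realization of the random subset Ω in Point-SAGA, where
`xᵢ = prox_{γfᵢ}(zᵢ)` is characterized by `xᵢ + γ∇fᵢ(xᵢ) = zᵢ`. -/
theorem pointSAGA_one_realization {E : Type*} [NormedAddCommGroup E]
    [InnerProductSpace ℝ E] [FiniteDimensional ℝ E]
    (μ L γ : ℝ) (hμ : 0 < μ) (hμL : μ ≤ L) (hγ : 0 < γ)
    (n s : ℕ) (hn : 1 ≤ n) (hs1 : 1 ≤ s) (hsn : s ≤ n)
    (f : Fin n → E → ℝ) (hdiff : ∀ i, Differentiable ℝ (f i))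
    (hsc : ∀ i, ConvexOn ℝ Set.univ (fun x => f i x - μ / 2 * ‖x‖ ^ 2))
    (hsmooth : ∀ i, ∀ a b : E, ‖gradient (f i) a - gradient (f i) b‖ ≤ L * ‖a - b‖)
    (xstar : E) (Ω : Finset (Fin n)) (hΩ : Ω.card = s)
    (z xi : Fin n → E)
    (hxi : ∀ i ∈ Ω, xi i + γ • gradient (f i) (xi i) = z i)
    (zstar : Fin n → E) (hzstar : ∀ i, zstar i = xstar + γ • gradient (f i) xstar)
    (x' : E) (hx' : x' = (s : ℝ)⁻¹ • ∑ i ∈ Ω, xi i) :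
    (1 + 2 * γ * μ * L / (L + μ)) * s * ‖x' - xstar‖ ^ 2
      + (1 + 2 / (γ * (L + μ))) * γ ^ 2 *
          ∑ i ∈ Ω, ‖gradient (f i) (xi i) - gradient (f i) xstar‖ ^ 2
      ≤ ∑ i ∈ Ω, ‖z i - zstar i‖ ^ 2 := by
  have hP : (0 : ℝ) < L + μ := by linarith
  set c1 : ℝ := 1 + 2 * γ * μ * L / (L + μ) with hc1
  set c2 : ℝ := (1 + 2 / (γ * (L + μ))) * γ ^ 2 with hc2
  have hc1nn : 0 ≤ c1 := by
    have hL : (0:ℝ) < L := lt_of_lt_of_le hμ hμL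
    have h0 : (0:ℝ) ≤ 2 * γ * μ * L :=
      mul_nonneg (mul_nonneg (mul_nonneg (by norm_num) hγ.le) hμ.le) hL.le
    have := div_nonneg h0 hP.le
    rw [hc1]; linarith
  -- per-index estimate
  have hkey : ∀ i ∈ Ω, c1 * ‖xi i - xstar‖ ^ 2
      + c2 * ‖gradient (f i) (xi i) - gradient (f i) xstar‖ ^ 2
      ≤ ‖z i - zstar i‖ ^ 2 := by
    intro i hi
    set g : E := gradient (f i) (xi i) - gradient (f i) xstar with hgdef
    set d : E := xi i - xstar with hddef
    have hz : z i - zstar i = d + γ • g := by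
      rw [← hxi i hi, hzstar i, hgdef, hddef, smul_sub]
      abel
    have hnorm : ‖z i - zstar i‖ ^ 2
        = ‖d‖ ^ 2 + 2 * γ * ⟪g, d⟫ + γ ^ 2 * ‖g‖ ^ 2 := by
      rw [hz, norm_add_sq_real, real_inner_smul_right, norm_smul, mul_pow,
        Real.norm_eq_abs, sq_abs, real_inner_comm]
      ring
    have hint : ‖g‖ ^ 2 + μ * L * ‖d‖ ^ 2 ≤ (L + μ) * ⟪g, d⟫ :=
      interpolation (hdiff i) hμ hμL (hsc i) (hsmooth i) (xi i) xstar
    set A : ℝ := 2 * γ / (L + μ) with hA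
    have hAnn : 0 ≤ A := by rw [hA]; positivity
    have hmul := mul_le_mul_of_nonneg_left hint hAnn
    have hAe : A * ((L + μ) * ⟪g, d⟫) = 2 * γ * ⟪g, d⟫ := by
      rw [hA]; field_simp
    rw [hAe] at hmul
    have ec1 : c1 = 1 + A * (μ * L) := by rw [hc1, hA]; ring
    have ec2 : c2 = γ ^ 2 + A := by
      rw [hc2, hA]; field_simp
    rw [hnorm, ec1, ec2]
    nlinarith [hmul]
  -- sum the per-index estimates
  have hsum : c1 * ∑ i ∈ Ω, ‖xi i - xstar‖ ^ 2
      + c2 * ∑ i ∈ Ω, ‖gradient (f i) (xi i) - gradient (f i) xstar‖ ^ 2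
      ≤ ∑ i ∈ Ω, ‖z i - zstar i‖ ^ 2 := by
    have := Finset.sum_le_sum hkey
    rwa [Finset.sum_add_distrib, ← Finset.mul_sum, ← Finset.mul_sum] at this
  -- convexity of the squared norm
  have hs0 : (0 : ℝ) < s := by exact_mod_cast hs1
  have hsne : (s : ℝ) ≠ 0 := ne_of_gt hs0
  have hxd : x' - xstar = (s : ℝ)⁻¹ • ∑ i ∈ Ω, (xi i - xstar) := by
    rw [hx', Finset.sum_sub_distrib, Finset.sum_const, hΩ, smul_sub,
      ← Nat.cast_smul_eq_nsmul ℝ, smul_smul, inv_mul_cancel₀ hsne, one_smul]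
  have hCS : ‖∑ i ∈ Ω, (xi i - xstar)‖ ^ 2 ≤ s * ∑ i ∈ Ω, ‖xi i - xstar‖ ^ 2 := by
    have h1 : ‖∑ i ∈ Ω, (xi i - xstar)‖ ≤ ∑ i ∈ Ω, ‖xi i - xstar‖ :=
      norm_sum_le _ _
    have h2 : (∑ i ∈ Ω, ‖xi i - xstar‖) ^ 2
        ≤ (Ω.card : ℝ) * ∑ i ∈ Ω, ‖xi i - xstar‖ ^ 2 := sq_sum_le_card_mul_sum_sq
    rw [hΩ] at h2
    calc ‖∑ i ∈ Ω, (xi i - xstar)‖ ^ 2 ≤ (∑ i ∈ Ω, ‖xi i - xstar‖) ^ 2 := by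
          apply pow_le_pow_left₀ (norm_nonneg _) h1
      _ ≤ s * ∑ i ∈ Ω, ‖xi i - xstar‖ ^ 2 := h2
  have hconvsq : (s : ℝ) * ‖x' - xstar‖ ^ 2 ≤ ∑ i ∈ Ω, ‖xi i - xstar‖ ^ 2 := by
    rw [hxd, norm_smul, mul_pow, Real.norm_eq_abs, sq_abs]
    rw [show (s : ℝ) * ((s : ℝ)⁻¹ ^ 2 * ‖∑ i ∈ Ω, (xi i - xstar)‖ ^ 2)
        = (s : ℝ)⁻¹ * ‖∑ i ∈ Ω, (xi i - xstar)‖ ^ 2 by field_simp]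
    rw [inv_mul_le_iff₀ hs0]
    exact hCS
  have hfinal := mul_le_mul_of_nonneg_left hconvsq hc1nn
  calc c1 * (s : ℝ) * ‖x' - xstar‖ ^ 2
      + c2 * ∑ i ∈ Ω, ‖gradient (f i) (xi i) - gradient (f i) xstar‖ ^ 2
      ≤ c1 * ∑ i ∈ Ω, ‖xi i - xstar‖ ^ 2
        + c2 * ∑ i ∈ Ω, ‖gradient (f i) (xi i) - gradient (f i) xstar‖ ^ 2 := by
        rw [mul_assoc]; linarith [hfinal]
    _ ≤ ∑ i ∈ Ω, ‖z i - zstar i‖ ^ 2 := hsum
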